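/- If I is a strongly (μ,σ)-entangled linear order and θ is an infinite cardinal with θ < σ and μ ≤ |I|, then 2^θ < μ. -/

import Mathlib

open Cardinal

universe u

/-- `I` is strongly (μ,σ)-entangled (Definition 6.12(1)). -/
def StronglyEntangled (μ σ : Cardinal.{u}) (I : Type u) [LinearOrder I] : Prop :=
  σ + ℵ₀ ≤ #I ∧ σ + ℵ₀ ≤ μ ∧
  ∀ (E : Type u), #E < 1 + σ → ∀ (u : Set E) (t : E → μ.ord.ToType → I),
    (∀ (α : μ.ord.ToType) (ζ ξ : E), ζ ∈ u → ξ ∉ u → t ζ α ≠ t ξ α) →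
    ∃ α β : μ.ord.ToType, α < β ∧
      (∀ e ∈ u, t e α ≤ t e β) ∧ (∀ e ∉ u, t e β ≤ t e α)

/-- Proposition 6.15(a): if `I` is strongly (μ,σ)-entangled, `ℵ₀ ≤ θ < σ`
    and `μ ≤ |I|`, then `2^θ < μ`. -/
theorem stmt_16 (μ σ θ : Cardinal.{u}) (I : Type u) [LinearOrder I]
    (hent : StronglyEntangled μ σ I)
    (hθ : ℵ₀ ≤ θ) (hθσ : θ < σ) (hμI : μ ≤ #I) :
    (2 : Cardinal.{u}) ^ θ < μ := by
  classical
  obtain ⟨hI, hμ, hmain⟩ := hent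
  by_contra hcon
  push_neg at hcon
  -- I is infinite, get four elements a < b < c < d
  have hinf : Infinite I := by
    rw [Cardinal.infinite_iff]
    exact le_trans (le_add_self) hI
  obtain ⟨a, b, c, d, hab, hbc, hcd⟩ : ∃ a b c d : I, a < b ∧ b < c ∧ c < d := by
    let f := Infinite.natEmbedding I
    let s : Finset I := (Finset.range 4).image f
    have hcard : s.card = 4 := by
      rw [Finset.card_image_of_injective _ f.injective, Finset.card_range]
    have hsort : (s.sort (· ≤ ·)).Pairwise (· < ·) := s.sortedLT_sort.pairwise
    have hlen : (s.sort (· ≤ ·)).length = 4 := by rw [Finset.length_sort, hcard]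
    rcases hl : s.sort (· ≤ ·) with _ | ⟨a, _ | ⟨b, _ | ⟨c, _ | ⟨d, _ | l⟩⟩⟩⟩ <;>
      rw [hl] at hlen <;> simp at hlen
    rw [hl] at hsort
    simp [List.pairwise_cons] at hsort
    exact ⟨a, b, c, d, hsort.1.1, hsort.2.1.1, hsort.2.2⟩
  -- the index set T of cardinality θ and an injection F : μ.ord.toType ↪ (T → Prop)
  set T := θ.ord.ToType with hT
  have hmkT : #T = θ := mk_ord_toType θ
  have hle : #μ.ord.ToType ≤ #(Set T) := by
    rw [mk_ord_toType, Cardinal.mk_set, hmkT]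
    exact hcon
  obtain ⟨F⟩ := hle
  -- the sequences
  set t : (T ⊕ T) → μ.ord.ToType → I := fun z α =>
    match z with
    | .inl e => if e ∈ F α then b else a
    | .inr e => if e ∈ F α then d else c
    with ht
  have hE : #(T ⊕ T) < 1 + σ := by
    rw [Cardinal.mk_sum, Cardinal.lift_id, hmkT, Cardinal.add_eq_self hθ]
    exact lt_of_lt_of_le hθσ (self_le_add_left σ 1)
  have hsep : ∀ (α : μ.ord.ToType) (ζ ξ : T ⊕ T),
      ζ ∈ Set.range Sum.inl → ξ ∉ Set.range Sum.inl → t ζ α ≠ t ξ α := by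
    rintro α ζ ξ ⟨e, rfl⟩ hξ
    cases ξ with
    | inl e' => exact absurd ⟨e', rfl⟩ hξ
    | inr e' =>
      simp only [ht]
      split_ifs
      · exact (hbc.trans hcd).ne
      · exact hbc.ne
      · exact (hab.trans (hbc.trans hcd)).ne
      · exact (hab.trans hbc).ne
  obtain ⟨α, β, hαβ, h1, h2⟩ := hmain (T ⊕ T) hE (Set.range Sum.inl) t hsep
  have hFne : F α ≠ F β := fun h => (ne_of_lt hαβ) (F.injective h)
  obtain ⟨e, he⟩ := Function.ne_iff.mp hFne
  by_cases h : e ∈ F α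
  · by_cases h' : e ∈ F β
    · exact he (propext (iff_of_true h h'))
    · have := h1 (Sum.inl e) ⟨e, rfl⟩
      simp only [ht, if_pos h, if_neg h'] at this
      exact absurd this (not_le_of_gt hab)
  · by_cases h' : e ∈ F β
    · have := h2 (Sum.inr e) (by rintro ⟨e', h⟩; exact Sum.inl_ne_inr h)
      simp only [ht, if_pos h', if_neg h] at this
      exact absurd this (not_le_of_gt hcd)
    · exact he (propext (iff_of_false h h'))
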